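/- Let n ≥ 1, let Ω ⊂ ℝⁿ be open, let r > 1, and let (f_k)_{k∈ℕ} be nonnegative functions in L¹(ℝⁿ) with sup_k ‖f_k‖_{L^r(Ω)} = M < ∞, such that the measures with densities f_k converge to a finite Borel measure μ in the sense that ∫ σ f_k dx → ∫ σ dμ for every continuous compactly supported σ : ℝⁿ → ℝ. Then μ(S) = 0 for every compact set S ⊂ Ω with Hausdorff dimension dim_H(S) < n. Consequently, the concentration dimension D := inf{ dim_H(S) : S ⊂ Ω compact, μ(S) > 0 } (defined to be n if the collection is empty) equals n. -/

import Mathlib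

open MeasureTheory Set Filter
open scoped Classical ENNReal

lemma vol_zero_of_dimH_lt {n : ℕ} {S : Set (EuclideanSpace ℝ (Fin n))}
    (h : dimH S < (n : ℝ≥0∞)) : volume S = 0 := by
  set e := EuclideanSpace.equiv (Fin n) ℝ with he
  have hcoe : ⇑((MeasurableEquiv.toLp 2 (Fin n → ℝ)).symm) = ⇑e := rfl
  have hdim : dimH (((MeasurableEquiv.toLp 2 (Fin n → ℝ)).symm) '' S) < (n : ℝ≥0∞) := by
    rw [hcoe, e.dimH_image]; exact h
  have h0 : (volume : Measure (Fin n → ℝ))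
      (((MeasurableEquiv.toLp 2 (Fin n → ℝ)).symm) '' S) = 0 := by
    have hH : (μH[((n : NNReal) : ℝ)] : Measure (Fin n → ℝ)) = volume := by
      have := MeasureTheory.hausdorffMeasure_pi_real (ι := Fin n)
      simpa using this
    rw [← hH]
    refine hausdorffMeasure_of_dimH_lt (d := (n : NNReal)) ?_
    simpa using hdim
  have hq := (EuclideanSpace.volume_preserving_symm_measurableEquiv_toLp (Fin n)).quasiMeasurePreserving
  have hpre : volume (((MeasurableEquiv.toLp 2 (Fin n → ℝ)).symm) ⁻¹'
      (((MeasurableEquiv.toLp 2 (Fin n → ℝ)).symm) '' S)) = 0 := hq.preimage_null h0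
  exact measure_mono_null (subset_preimage_image _ _) hpre

/-- If the measures `f_k dx` converge weak-* to a finite measure `μ` and the `f_k` are
uniformly bounded in `L^r(Ω)` for some `r > 1`, then `μ` vanishes on compact subsets of
the open set `Ω` of Hausdorff dimension less than `n`, and the concentration dimension
of `μ` in `Ω` equals `n`. -/
theorem stmt_19 (n : ℕ) (hn : 1 ≤ n) (Ω : Set (EuclideanSpace ℝ (Fin n)))
    (hΩ : IsOpen Ω) (r : ℝ) (hr : 1 < r) (M : ℝ)
    (f : ℕ → EuclideanSpace ℝ (Fin n) → ℝ)
    (hf0 : ∀ k x, 0 ≤ f k x) (hfi : ∀ k, Integrable (f k))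
    (hM : ∀ k, eLpNorm (f k) (ENNReal.ofReal r) (volume.restrict Ω) ≤ ENNReal.ofReal M)
    (μ : Measure (EuclideanSpace ℝ (Fin n))) (hμfin : IsFiniteMeasure μ)
    (hconv : ∀ σ : EuclideanSpace ℝ (Fin n) → ℝ, Continuous σ → HasCompactSupport σ →
      Tendsto (fun k => ∫ x, σ x * f k x) atTop (nhds (∫ x, σ x ∂μ))) :
    (∀ S : Set (EuclideanSpace ℝ (Fin n)), S ⊆ Ω → IsCompact S →
      dimH S < (n : ℝ≥0∞) → μ S = 0)
    ∧ (if (∃ S : Set (EuclideanSpace ℝ (Fin n)), S ⊆ Ω ∧ IsCompact S ∧ 0 < μ S)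
        then sInf {d : ℝ≥0∞ | ∃ S : Set (EuclideanSpace ℝ (Fin n)),
          S ⊆ Ω ∧ IsCompact S ∧ 0 < μ S ∧ dimH S = d}
        else (n : ℝ≥0∞)) = (n : ℝ≥0∞) := by
  have hr0 : (0:ℝ) < r := lt_trans one_pos hr
  have hpq : Real.HolderConjugate r (Real.conjExponent r) := Real.HolderConjugate.conjExponent hr
  set q := Real.conjExponent r with hqdef
  have hqpos : 0 < q := hpq.symm.pos
  have key : ∀ S : Set (EuclideanSpace ℝ (Fin n)), S ⊆ Ω → IsCompact S →
      dimH S < (n : ℝ≥0∞) → μ S = 0 := by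
    intro S hSΩ hSc hdim
    have hvol : volume S = 0 := vol_zero_of_dimH_lt hdim
    by_contra hne
    have hfin : μ S < ⊤ := measure_lt_top μ S
    set δ := μ S / 2 with hδdef
    have hδpos : 0 < δ := ENNReal.half_pos hne
    have hδlt : δ < μ S := ENNReal.half_lt_self hne hfin.ne
    have hδtop : δ ≠ ⊤ := (hδlt.trans hfin).ne
    set Mb : ℝ≥0∞ := ENNReal.ofReal M + 1 with hMbdef
    have hMb0 : Mb ≠ 0 := by simp [hMbdef]
    have hMbt : Mb ≠ ⊤ := by simp [hMbdef]
    set x := δ / Mb with hxdef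
    have hx0 : x ≠ 0 := by
      simp only [hxdef, ne_eq, ENNReal.div_eq_zero_iff, not_or]
      exact ⟨hδpos.ne', hMbt⟩
    have hxt : x ≠ ⊤ := by
      simp only [hxdef, ne_eq, ENNReal.div_eq_top, not_and_or, not_not]
      push_neg
      exact ⟨fun _ => hMb0, fun h => absurd h hδtop⟩
    set η := x ^ q with hηdef
    have hη0 : 0 < η := ENNReal.rpow_pos (pos_iff_ne_zero.mpr hx0) hxt
    obtain ⟨U₀, hU₀S, hU₀o, hU₀lt⟩ := Set.exists_isOpen_lt_of_lt S η (by
      rw [hvol]; exact hη0)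
    set U := U₀ ∩ Ω with hUdef
    have hUo : IsOpen U := hU₀o.inter hΩ
    have hSU : S ⊆ U := subset_inter hU₀S hSΩ
    have hUΩ : U ⊆ Ω := inter_subset_right
    have hUvol : volume U < η := lt_of_le_of_lt (measure_mono inter_subset_left) hU₀lt
    obtain ⟨σ, hσ1, hσ0, hσc, hσIcc⟩ := exists_continuous_one_zero_of_isCompact hSc
      hUo.isClosed_compl (Set.disjoint_left.mpr fun x hx hxc => hxc (hSU hx))
    -- Step A : μ S ≤ ofReal (∫ σ dμ)
    have hσint : Integrable (⇑σ) μ := σ.continuous.integrable_of_hasCompactSupport hσc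
    have hSmeas : MeasurableSet S := hSc.measurableSet
    have hindint : Integrable (S.indicator fun _ => (1:ℝ)) μ := by
      rw [integrable_indicator_iff hSmeas]
      exact integrableOn_const hfin.ne
    have hle : (μ S).toReal ≤ ∫ x, σ x ∂μ := by
      have hI := integral_indicator_const (μ := μ) (1:ℝ) hSmeas
      calc (μ S).toReal = ∫ x, S.indicator (fun _ => (1:ℝ)) x ∂μ := by rw [hI]; simp; rfl
        _ ≤ ∫ x, σ x ∂μ := by
            refine integral_mono hindint hσint fun y => ?_
            by_cases hy : y ∈ S
            · rw [indicator_of_mem hy]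
              have := hσ1 hy
              simp only [Pi.one_apply] at this
              rw [this]
            · rw [indicator_of_notMem hy]
              exact (hσIcc y).1
    have hA : μ S ≤ ENNReal.ofReal (∫ x, σ x ∂μ) := by
      rw [← ENNReal.ofReal_toReal hfin.ne]
      exact ENNReal.ofReal_le_ofReal hle
    -- Step B : uniform bound
    have hB : ∀ k, ENNReal.ofReal (∫ x, σ x * f k x) ≤ ENNReal.ofReal M * η ^ (1/q) := by
      intro k
      have hσb : ∃ C, ∀ y, ‖σ y‖ ≤ C := ⟨1, fun y => by
        rw [Real.norm_eq_abs, abs_of_nonneg (hσIcc y).1]; exact (hσIcc y).2⟩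
      have hint : Integrable (fun y => σ y * f k y) :=
        (hfi k).bdd_mul σ.continuous.aestronglyMeasurable (ae_of_all _ hσb.choose_spec)
      have hnn : 0 ≤ᶠ[ae volume] fun y => σ y * f k y :=
        Filter.Eventually.of_forall fun y => mul_nonneg (hσIcc y).1 (hf0 k y)
      rw [ofReal_integral_eq_lintegral_ofReal hint hnn]
      have step1 : ∫⁻ y, ENNReal.ofReal (σ y * f k y) ≤
          ∫⁻ y in Ω, ENNReal.ofReal (σ y * f k y) := by
        rw [← lintegral_indicator hΩ.measurableSet]
        refine lintegral_mono fun y => ?_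
        by_cases hy : y ∈ Ω
        · rw [indicator_of_mem hy]
        · have hσy : σ y = 0 := hσ0 fun hyU => hy (hUΩ hyU)
          rw [indicator_of_notMem hy, hσy, zero_mul, ENNReal.ofReal_zero]
      refine le_trans step1 ?_
      set F : EuclideanSpace ℝ (Fin n) → ℝ≥0∞ := fun y => ENNReal.ofReal (f k y) with hF
      set G : EuclideanSpace ℝ (Fin n) → ℝ≥0∞ := U.indicator (fun _ => 1) with hG
      have hFG : ∀ y, ENNReal.ofReal (σ y * f k y) ≤ (F * G) y := by
        intro y
        rw [ENNReal.ofReal_mul (hσIcc y).1]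
        by_cases hy : y ∈ U
        · have : G y = 1 := by simp [hG, indicator_of_mem hy]
          simp only [Pi.mul_apply, this, mul_one, hF]
          calc ENNReal.ofReal (σ y) * ENNReal.ofReal (f k y)
              ≤ 1 * ENNReal.ofReal (f k y) := by
                refine mul_le_mul_left ?_ _
                rw [show (1:ℝ≥0∞) = ENNReal.ofReal 1 by simp]
                exact ENNReal.ofReal_le_ofReal (hσIcc y).2
            _ = ENNReal.ofReal (f k y) := one_mul _
        · have hσy : σ y = 0 := hσ0 hy
          simp [hσy]
      have hFmeas : AEMeasurable F (volume.restrict Ω) :=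
        (ENNReal.measurable_ofReal.comp_aemeasurable
          ((hfi k).aestronglyMeasurable.aemeasurable.restrict))
      have hGmeas : AEMeasurable G (volume.restrict Ω) :=
        ((measurable_const (a := (1:ℝ≥0∞))).indicator hUo.measurableSet).aemeasurable
      have holder := ENNReal.lintegral_mul_le_Lp_mul_Lq (volume.restrict Ω) hpq hFmeas hGmeas
      refine le_trans (le_trans (lintegral_mono hFG) holder) ?_
      have h1 : (∫⁻ y in Ω, F y ^ r) ^ (1/r) ≤ ENNReal.ofReal M := by
        have hMk := hM k
        rw [eLpNorm_eq_lintegral_rpow_enorm_toReal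
          (by simp [ENNReal.ofReal_eq_zero, not_le, hr0])
          ENNReal.ofReal_ne_top] at hMk
        rw [ENNReal.toReal_ofReal hr0.le] at hMk
        have : ∀ y, ‖f k y‖ₑ = F y := fun y => by
          rw [hF, Real.enorm_eq_ofReal (hf0 k y)]
        simp only [this] at hMk
        exact hMk
      have h2 : (∫⁻ y in Ω, G y ^ q) ^ (1/q) ≤ η ^ (1/q) := by
        have hGq : ∀ y, G y ^ q = G y := by
          intro y
          by_cases hy : y ∈ U
          · simp [hG, indicator_of_mem hy]
          · simp [hG, indicator_of_notMem hy, ENNReal.zero_rpow_of_pos hqpos]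
        simp only [hGq]
        have : ∫⁻ y in Ω, G y = (volume.restrict Ω) U := by
          rw [hG]
          exact lintegral_indicator_one hUo.measurableSet
        rw [this]
        refine ENNReal.rpow_le_rpow ?_ (by positivity)
        exact le_trans (Measure.restrict_apply_le _ _) hUvol.le
      exact mul_le_mul' h1 h2
    -- Step C : pass to the limit
    have hC : ENNReal.ofReal (∫ y, σ y ∂μ) ≤ ENNReal.ofReal M * η ^ (1/q) := by
      have ht := (ENNReal.continuous_ofReal.tendsto _).comp
        (hconv σ σ.continuous hσc)
      exact le_of_tendsto ht (Filter.Eventually.of_forall hB)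
    -- conclude
    have hfinal : μ S ≤ δ := by
      have hηx : η ^ (1/q) = x := by
        rw [hηdef, ← ENNReal.rpow_mul, mul_one_div_cancel hqpos.ne', ENNReal.rpow_one]
      calc μ S ≤ ENNReal.ofReal M * η ^ (1/q) := hA.trans hC
        _ ≤ Mb * x := by
            rw [hηx]
            exact mul_le_mul_left (le_self_add) x
        _ = δ := ENNReal.mul_div_cancel hMb0 hMbt
    exact absurd (lt_of_le_of_lt hfinal hδlt) (lt_irrefl _)
  refine ⟨key, ?_⟩
  split_ifs with h
  · obtain ⟨S, hSΩ, hSc, hSpos⟩ := h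
    have hdim : ∀ T : Set (EuclideanSpace ℝ (Fin n)), T ⊆ Ω → IsCompact T →
        0 < μ T → dimH T = (n : ℝ≥0∞) := by
      intro T hTΩ hTc hTpos
      refine le_antisymm ?_ ?_
      · calc dimH T ≤ dimH (univ : Set (EuclideanSpace ℝ (Fin n))) :=
              dimH_mono (subset_univ T)
          _ = (n : ℝ≥0∞) := by
              rw [Real.dimH_univ_eq_finrank, finrank_euclideanSpace_fin]
      · by_contra hlt
        exact absurd (key T hTΩ hTc (lt_of_not_ge hlt)) hTpos.ne'
    have hset : {d : ℝ≥0∞ | ∃ S : Set (EuclideanSpace ℝ (Fin n)),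
        S ⊆ Ω ∧ IsCompact S ∧ 0 < μ S ∧ dimH S = d} = {(n : ℝ≥0∞)} := by
      apply Subset.antisymm
      · rintro d ⟨T, hTΩ, hTc, hTpos, rfl⟩
        exact hdim T hTΩ hTc hTpos
      · rintro d hd
        rw [mem_singleton_iff] at hd
        subst hd
        exact ⟨S, hSΩ, hSc, hSpos, hdim S hSΩ hSc hSpos⟩
    rw [hset, sInf_singleton]
  · rfl
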